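/- Let R be a commutative ring. Then R is a Gelfand ring and the maximal spectrum Specm(R) (with the Zariski topology) is totally disconnected, if and only if R is a clean ring, i.e. every element of R is the sum of a unit and an idempotent. -/

import Mathlib

/-- A commutative ring `R` is a Gelfand ring if for any two distinct maximal ideals
`m`, `m'` there are `a ∉ m`, `a' ∉ m'` with `a * a' = 0`. -/
def IsGelfandRing (R : Type*) [CommRing R] : Prop :=
  ∀ m m' : Ideal R, m.IsMaximal → m'.IsMaximal → m ≠ m' →
    ∃ a a' : R, a ∉ m ∧ a' ∉ m' ∧ a * a' = 0

namespace GelfandCleanAux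

open PrimeSpectrum MaximalSpectrum

variable {R : Type*} [CommRing R]

lemma mem_preZL {S : Set R} {m : MaximalSpectrum R} :
    m ∈ toPrimeSpectrum ⁻¹' zeroLocus S ↔ S ⊆ ↑m.asIdeal := Iff.rfl

lemma mem_preZL_singleton {b : R} {m : MaximalSpectrum R} :
    m ∈ toPrimeSpectrum ⁻¹' zeroLocus {b} ↔ b ∈ m.asIdeal := by
  rw [mem_preZL, Set.singleton_subset_iff]; rfl

/-- The maximal spectrum is compact. -/
lemma maxSpec_compactSpace : CompactSpace (MaximalSpectrum R) := by
  classical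
  constructor
  apply isCompact_of_finite_subfamily_closed
  intro ι Z hZc hZe
  choose C hCc hCeq using fun i => isClosed_induced_iff.mp (hZc i)
  choose S hSeq using fun i => (isClosed_iff_zeroLocus _).mp (hCc i)
  have htop : Ideal.span (⋃ i, S i) = ⊤ := by
    by_contra hT
    obtain ⟨M, hM, hMle⟩ := Ideal.exists_le_maximal _ hT
    have hmem : (⟨M, hM⟩ : MaximalSpectrum R) ∈ Set.univ ∩ ⋂ i, Z i := by
      refine ⟨trivial, Set.mem_iInter.mpr fun i => ?_⟩
      rw [← hCeq i, hSeq i]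
      intro r hr
      exact hMle (Ideal.subset_span (Set.mem_iUnion.mpr ⟨i, hr⟩))
    rw [hZe] at hmem
    exact hmem
  have h1 : (1 : R) ∈ Ideal.span (⋃ i, S i) := htop ▸ Submodule.mem_top
  obtain ⟨F, hFsub, hF1⟩ := Submodule.mem_span_finite_of_mem_span h1
  choose idx hidx using fun r : F => Set.mem_iUnion.mp (hFsub r.2)
  refine ⟨F.attach.image idx, ?_⟩
  rw [Set.eq_empty_iff_forall_notMem]
  rintro m ⟨-, hm⟩
  rw [Set.mem_iInter₂] at hm
  have hle : Ideal.span (↑F : Set R) ≤ m.asIdeal := by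
    rw [Ideal.span_le]
    intro r hr
    have h := hm (idx ⟨r, hr⟩)
      (Finset.mem_image.mpr ⟨⟨r, hr⟩, Finset.mem_attach _ _, rfl⟩)
    rw [← hCeq, hSeq] at h
    exact h (hidx ⟨r, hr⟩)
  exact m.isMaximal.ne_top ((Ideal.eq_top_iff_one _).mpr (hle hF1))

/-- A Gelfand ring has Hausdorff maximal spectrum. -/
lemma t2_of_gelfand (hG : IsGelfandRing R) : T2Space (MaximalSpectrum R) := by
  constructor
  intro x y hxy
  have hne : x.asIdeal ≠ y.asIdeal := fun h => hxy (MaximalSpectrum.ext h)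
  obtain ⟨a, a', ha, ha', hmul⟩ := hG _ _ x.isMaximal y.isMaximal hne
  refine ⟨toPrimeSpectrum ⁻¹' (basicOpen a : Set (PrimeSpectrum R)),
      toPrimeSpectrum ⁻¹' (basicOpen a' : Set (PrimeSpectrum R)),
      (basicOpen a).2.preimage toPrimeSpectrum_continuous,
      (basicOpen a').2.preimage toPrimeSpectrum_continuous, ?_, ?_, ?_⟩
  · exact ha
  · exact ha'
  · rw [Set.disjoint_left]
    intro n hn hn'
    simp only [Set.mem_preimage, SetLike.mem_coe, mem_basicOpen] at hn hn'
    have h0 : a * a' ∈ n.asIdeal := by rw [hmul]; exact n.asIdeal.zero_mem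
    rcases n.isMaximal.isPrime.mem_or_mem h0 with h | h
    exacts [hn h, hn' h]

/-- The hard direction: a Gelfand ring with totally disconnected
maximal spectrum is clean. -/
theorem clean_of_gelfand_td (hG : IsGelfandRing R)
    (hTD : TotallyDisconnectedSpace (MaximalSpectrum R)) (a : R) :
    ∃ u e : R, IsUnit u ∧ IsIdempotentElem e ∧ a = u + e := by
  classical
  haveI := maxSpec_compactSpace (R := R)
  haveI := t2_of_gelfand hG
  -- the two closed sets to separate
  set A : Set (MaximalSpectrum R) := toPrimeSpectrum ⁻¹' zeroLocus {a - 1} with hAdef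
  set B : Set (MaximalSpectrum R) := toPrimeSpectrum ⁻¹' zeroLocus {a} with hBdef
  have hAc : IsClosed A := (isClosed_zeroLocus _).preimage toPrimeSpectrum_continuous
  have hBc : IsClosed B := (isClosed_zeroLocus _).preimage toPrimeSpectrum_continuous
  have hAB : ∀ m, m ∈ A → m ∈ B → False := by
    intro m hmA hmB
    rw [hAdef, mem_preZL_singleton] at hmA
    rw [hBdef, mem_preZL_singleton] at hmB
    have : (1 : R) ∈ m.asIdeal := by
      have := m.asIdeal.sub_mem hmB hmA
      simpa using this
    exact m.isMaximal.ne_top ((Ideal.eq_top_iff_one _).mpr this)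
  -- a clopen set K with A ⊆ K and K ∩ B = ∅
  have hVex : ∀ x : A, ∃ V : Set (MaximalSpectrum R), IsClopen V ∧ ↑x ∈ V ∧ V ⊆ Bᶜ := by
    intro x
    exact compact_exists_isClopen_in_isOpen hBc.isOpen_compl fun hxB => hAB x x.2 hxB
  choose V hVclopen hVmem hVsub using hVex
  obtain ⟨t, ht⟩ := hAc.isCompact.elim_finite_subcover V (fun x => (hVclopen x).2)
    (fun z hz => Set.mem_iUnion.mpr ⟨⟨z, hz⟩, hVmem ⟨z, hz⟩⟩)
  set K : Set (MaximalSpectrum R) := ⋃ x ∈ t, V x with hKdef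
  have hKclopen : IsClopen K := by
    constructor
    · exact Set.Finite.isClosed_biUnion t.finite_toSet fun x _ => (hVclopen x).1
    · exact isOpen_biUnion fun x _ => (hVclopen x).2
  have hAK : A ⊆ K := ht
  have hKB : ∀ m ∈ K, m ∉ B := by
    intro m hm hmB
    obtain ⟨x, -, hx⟩ := Set.mem_iUnion₂.mp hm
    exact hVsub x hx hmB
  -- write K and Kᶜ as zero loci, get i + j = 1
  obtain ⟨C₁, hC₁c, hC₁⟩ := isClosed_induced_iff.mp hKclopen.1
  obtain ⟨S₁, hS₁⟩ := (isClosed_iff_zeroLocus _).mp hC₁c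
  obtain ⟨C₂, hC₂c, hC₂⟩ := isClosed_induced_iff.mp hKclopen.2.isClosed_compl
  obtain ⟨S₂, hS₂⟩ := (isClosed_iff_zeroLocus _).mp hC₂c
  have hKeq : K = toPrimeSpectrum ⁻¹' zeroLocus S₁ := by rw [← hC₁, hS₁]
  have hKceq : Kᶜ = toPrimeSpectrum ⁻¹' zeroLocus S₂ := by rw [← hC₂, hS₂]
  have htop : Ideal.span (S₁ ∪ S₂) = ⊤ := by
    by_contra hT
    obtain ⟨M, hM, hMle⟩ := Ideal.exists_le_maximal _ hT
    set N : MaximalSpectrum R := ⟨M, hM⟩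
    have hN1 : N ∈ K := by
      rw [hKeq, mem_preZL]
      exact fun r hr => hMle (Ideal.subset_span (Or.inl hr))
    have hN2 : N ∈ Kᶜ := by
      rw [hKceq, mem_preZL]
      exact fun r hr => hMle (Ideal.subset_span (Or.inr hr))
    exact hN2 hN1
  have h1 : (1 : R) ∈ Ideal.span S₁ ⊔ Ideal.span S₂ := by
    rw [← Ideal.span_union]
    exact htop ▸ Submodule.mem_top
  obtain ⟨i, hi, j, hj, hij⟩ := Submodule.mem_sup.mp h1
  have hiK : ∀ m : MaximalSpectrum R, m ∈ K → i ∈ m.asIdeal := by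
    intro m hm
    rw [hKeq, mem_preZL] at hm
    exact Ideal.span_le.mpr hm hi
  have hjK : ∀ m : MaximalSpectrum R, m ∉ K → j ∈ m.asIdeal := by
    intro m hm
    rw [← Set.mem_compl_iff, hKceq, mem_preZL] at hm
    exact Ideal.span_le.mpr hm hj
  -- step 1 : for every m ∈ K, find X ∉ m killing some W invertible off K
  have step1 : ∀ m : {m : MaximalSpectrum R // m ∈ K}, ∃ X W : R,
      X ∉ m.1.asIdeal ∧ (∀ m' : MaximalSpectrum R, m' ∉ K → W ∉ m'.asIdeal) ∧ X * W = 0 := by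
    rintro ⟨m, hm⟩
    have hpairs : ∀ m' : {n : MaximalSpectrum R // n ∉ K},
        ∃ x y : R, x ∉ m.asIdeal ∧ y ∉ m'.1.asIdeal ∧ x * y = 0 := by
      rintro ⟨m', hm'⟩
      refine hG _ _ m.isMaximal m'.isMaximal fun h => hm' ?_
      have hmeq : m = m' := MaximalSpectrum.ext h
      rwa [← hmeq]
    choose x y hx hy hxy using hpairs
    set T : Set R := Set.range y with hTdef
    have htop2 : Ideal.span ({j} ∪ T) = ⊤ := by
      by_contra hT
      obtain ⟨M, hM, hMle⟩ := Ideal.exists_le_maximal _ hT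
      set N : MaximalSpectrum R := ⟨M, hM⟩
      by_cases hN : N ∈ K
      · have hiN : i ∈ M := hiK N hN
        have hjN : j ∈ M := hMle (Ideal.subset_span (Or.inl rfl))
        have h1M : (1 : R) ∈ M := by rw [← hij]; exact Ideal.add_mem _ hiN hjN
        exact hM.ne_top ((Ideal.eq_top_iff_one _).mpr h1M)
      · exact hy ⟨N, hN⟩ (hMle (Ideal.subset_span (Or.inr ⟨⟨N, hN⟩, rfl⟩)))
    have h1' : (1 : R) ∈ Ideal.span {j} ⊔ Ideal.span T := by
      rw [← Ideal.span_union]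
      exact htop2 ▸ Submodule.mem_top
    obtain ⟨p, hp, q, hq, hpq⟩ := Submodule.mem_sup.mp h1'
    obtain ⟨s, hs⟩ := Ideal.mem_span_singleton'.mp hp
    obtain ⟨F, hFT, hqF⟩ := Submodule.mem_span_finite_of_mem_span hq
    choose mm hmm using fun r : F => hFT r.2
    set X : R := ∏ r ∈ F.attach, x (mm r) with hXdef
    refine ⟨X, q, ?_, ?_, ?_⟩
    · intro hX
      obtain ⟨r, -, hr⟩ := Ideal.IsPrime.prod_mem_iff.mp hX
      exact hx (mm r) hr
    · intro m' hm' hW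
      have hjm' : j ∈ m'.asIdeal := hjK m' hm'
      have h1m' : (1 : R) ∈ m'.asIdeal := by
        rw [← hpq, ← hs]
        exact Ideal.add_mem _ (Ideal.mul_mem_left _ _ hjm') hW
      exact m'.isMaximal.ne_top ((Ideal.eq_top_iff_one _).mpr h1m')
    · have hker : Submodule.span R (↑F : Set R) ≤ LinearMap.ker (LinearMap.mulLeft R X) := by
        rw [Submodule.span_le]
        intro r hr
        rw [SetLike.mem_coe, LinearMap.mem_ker, LinearMap.mulLeft_apply]
        have hfac := Finset.mul_prod_erase F.attach (fun r : F => x (mm r))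
          (Finset.mem_attach F ⟨r, hr⟩)
        have h0 : x (mm ⟨r, hr⟩) * r = 0 := by
          have h0' := hxy (mm ⟨r, hr⟩)
          rwa [hmm ⟨r, hr⟩] at h0'
        calc X * r = (x (mm ⟨r, hr⟩) * ∏ u ∈ F.attach.erase ⟨r, hr⟩, x (mm u)) * r :=
              congrArg (· * r) hfac.symm
          _ = (∏ u ∈ F.attach.erase ⟨r, hr⟩, x (mm u)) * (x (mm ⟨r, hr⟩) * r) := by ring
          _ = 0 := by rw [h0, mul_zero]
      have := hker hqF
      rwa [LinearMap.mem_ker, LinearMap.mulLeft_apply] at this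
  choose X W hX hW hXW using step1
  -- step 2 : globalize
  set T2 : Set R := Set.range X with hT2def
  have htop3 : Ideal.span ({i} ∪ T2) = ⊤ := by
    by_contra hT
    obtain ⟨M, hM, hMle⟩ := Ideal.exists_le_maximal _ hT
    set N : MaximalSpectrum R := ⟨M, hM⟩
    by_cases hN : N ∈ K
    · exact hX ⟨N, hN⟩ (hMle (Ideal.subset_span (Or.inr ⟨⟨N, hN⟩, rfl⟩)))
    · have hiN : i ∈ M := hMle (Ideal.subset_span (Or.inl rfl))
      have hjN : j ∈ M := hjK N hN
      have h1M : (1 : R) ∈ M := by rw [← hij]; exact Ideal.add_mem _ hiN hjN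
      exact hM.ne_top ((Ideal.eq_top_iff_one _).mpr h1M)
  have h1'' : (1 : R) ∈ Ideal.span {i} ⊔ Ideal.span T2 := by
    rw [← Ideal.span_union]
    exact htop3 ▸ Submodule.mem_top
  obtain ⟨p, hp, q, hq, hpq⟩ := Submodule.mem_sup.mp h1''
  obtain ⟨s, hs⟩ := Ideal.mem_span_singleton'.mp hp
  obtain ⟨F, hFT, hqF⟩ := Submodule.mem_span_finite_of_mem_span hq
  choose mm hmmX using fun r : F => hFT r.2
  set v : R := ∏ r ∈ F.attach, W (mm r) with hvdef
  have hv : ∀ m' : MaximalSpectrum R, m' ∉ K → v ∉ m'.asIdeal := by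
    intro m' hm' hvm
    obtain ⟨r, -, hr⟩ := Ideal.IsPrime.prod_mem_iff.mp hvm
    exact hW (mm r) m' hm' hr
  have hqK : ∀ m : MaximalSpectrum R, m ∈ K → q ∉ m.asIdeal := by
    intro m hm hqm
    have hiN : i ∈ m.asIdeal := hiK m hm
    have h1M : (1 : R) ∈ m.asIdeal := by
      rw [← hpq, ← hs]
      exact Ideal.add_mem _ (Ideal.mul_mem_left _ _ hiN) hqm
    exact m.isMaximal.ne_top ((Ideal.eq_top_iff_one _).mpr h1M)
  have hqv : q * v = 0 := by
    have hker : Submodule.span R (↑F : Set R) ≤ LinearMap.ker (LinearMap.mulLeft R v) := by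
      rw [Submodule.span_le]
      intro r hr
      rw [SetLike.mem_coe, LinearMap.mem_ker, LinearMap.mulLeft_apply]
      have hfac := Finset.mul_prod_erase F.attach (fun r : F => W (mm r))
        (Finset.mem_attach F ⟨r, hr⟩)
      have h0 : X (mm ⟨r, hr⟩) * W (mm ⟨r, hr⟩) = 0 := hXW (mm ⟨r, hr⟩)
      have hXr : X (mm ⟨r, hr⟩) = r := hmmX ⟨r, hr⟩
      calc v * r = (W (mm ⟨r, hr⟩) * ∏ u ∈ F.attach.erase ⟨r, hr⟩, W (mm u)) * r :=
            congrArg (· * r) hfac.symm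
        _ = (∏ u ∈ F.attach.erase ⟨r, hr⟩, W (mm u)) * (X (mm ⟨r, hr⟩) * W (mm ⟨r, hr⟩)) := by
            rw [hXr]; ring
        _ = 0 := by rw [h0, mul_zero]
    have := hker hqF
    rw [LinearMap.mem_ker, LinearMap.mulLeft_apply] at this
    rw [mul_comm]
    exact this
  -- q is invertible on K, v off K, q*v = 0 : build the idempotent
  have hvK : ∀ m : MaximalSpectrum R, m ∈ K → v ∈ m.asIdeal := by
    intro m hm
    have h0 : q * v ∈ m.asIdeal := by rw [hqv]; exact m.asIdeal.zero_mem
    rcases m.isMaximal.isPrime.mem_or_mem h0 with h | h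
    · exact absurd h (hqK m hm)
    · exact h
  have hqKc : ∀ m : MaximalSpectrum R, m ∉ K → q ∈ m.asIdeal := by
    intro m hm
    have h0 : q * v ∈ m.asIdeal := by rw [hqv]; exact m.asIdeal.zero_mem
    rcases m.isMaximal.isPrime.mem_or_mem h0 with h | h
    · exact h
    · exact absurd h (hv m hm)
  have htop4 : Ideal.span {q} ⊔ Ideal.span {v} = ⊤ := by
    by_contra hT
    obtain ⟨M, hM, hMle⟩ := Ideal.exists_le_maximal _ hT
    set N : MaximalSpectrum R := ⟨M, hM⟩
    have hqM : q ∈ M := hMle (le_sup_left (a := Ideal.span {q}) (Ideal.subset_span rfl))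
    have hvM : v ∈ M := hMle (le_sup_right (a := Ideal.span {q}) (Ideal.subset_span rfl))
    by_cases hN : N ∈ K
    · exact hqK N hN hqM
    · exact hv N hN hvM
  have h1''' : (1 : R) ∈ Ideal.span {q} ⊔ Ideal.span {v} := htop4 ▸ Submodule.mem_top
  obtain ⟨p', hp', q', hq', hpq'⟩ := Submodule.mem_sup.mp h1'''
  obtain ⟨c, hc⟩ := Ideal.mem_span_singleton'.mp hp'
  obtain ⟨d, hd⟩ := Ideal.mem_span_singleton'.mp hq'
  have hcd : c * q + d * v = 1 := by rw [hc, hd, hpq']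
  set e : R := d * v with hedef
  have he : IsIdempotentElem e := by
    show e * e = e
    rw [hedef]
    linear_combination d * v * hcd - c * d * hqv
  have heK : ∀ m : MaximalSpectrum R, m ∈ K → e ∈ m.asIdeal := fun m hm =>
    Ideal.mul_mem_left _ _ (hvK m hm)
  have heKc : ∀ m : MaximalSpectrum R, m ∉ K → e ∉ m.asIdeal := by
    intro m hm hem
    have h1M : (1 : R) ∈ m.asIdeal := by
      rw [← hcd]
      exact Ideal.add_mem _ (Ideal.mul_mem_left _ _ (hqKc m hm)) hem
    exact m.isMaximal.ne_top ((Ideal.eq_top_iff_one _).mpr h1M)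
  -- a - e is a unit
  have hu : IsUnit (a - e) := by
    by_contra hnu
    obtain ⟨M, hM, hmem⟩ := exists_max_ideal_of_mem_nonunits (mem_nonunits_iff.mpr hnu)
    set N : MaximalSpectrum R := ⟨M, hM⟩
    by_cases hN : N ∈ K
    · have haM : a ∉ M := by
        intro haM
        exact hKB N hN (mem_preZL_singleton.mpr haM)
      have heM : e ∈ M := heK N hN
      exact haM (by simpa using M.add_mem hmem heM)
    · have haM : a - 1 ∉ M := by
        intro haM
        exact hN (hAK (mem_preZL_singleton.mpr haM))
      have heM : e ∉ M := heKc N hN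
      have h1eM : 1 - e ∈ M := by
        have h0 : e * (1 - e) ∈ M := by
          have : e * (1 - e) = 0 := by linear_combination -he.eq
          rw [this]; exact M.zero_mem
        rcases hM.isPrime.mem_or_mem h0 with h | h
        · exact absurd h heM
        · exact h
      refine haM ?_
      have := M.sub_mem hmem h1eM
      simpa using this
  exact ⟨a - e, e, hu, he, by ring⟩

/-- In a clean ring, distinct maximal ideals are separated by an idempotent. -/
lemma idem_sep_of_clean (h : ∀ a : R, ∃ u e : R, IsUnit u ∧ IsIdempotentElem e ∧ a = u + e)
    {m m' : Ideal R} (hm : m.IsMaximal) (hm' : m'.IsMaximal) (hne : m ≠ m') :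
    ∃ e : R, IsIdempotentElem e ∧ e ∈ m ∧ 1 - e ∈ m' := by
  have hsup : m ⊔ m' = ⊤ := Ideal.IsMaximal.coprime_of_ne hm hm' hne
  have h1 : (1 : R) ∈ m ⊔ m' := hsup ▸ Submodule.mem_top
  obtain ⟨x, hx, y, hy, hxy⟩ := Submodule.mem_sup.mp h1
  obtain ⟨u, f, hu, hf, hxuf⟩ := h x
  obtain ⟨U, hU⟩ := hu
  have hx' : x = ↑U + f := by rw [hxuf, hU]
  have hff : f * f = f := hf
  refine ⟨1 - f, hf.one_sub, ?_, ?_⟩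
  · have key : ((1 - f) * x) * ↑U⁻¹ = 1 - f := by
      have k1 : (1 - f) * x = (1 - f) * ↑U := by
        rw [hx']
        linear_combination -hff
      rw [k1, mul_assoc, Units.mul_inv, mul_one]
    rw [← key]
    exact Ideal.mul_mem_right _ _ (Ideal.mul_mem_left _ _ hx)
  · have hy' : y = 1 - x := eq_sub_of_add_eq' hxy
    have key : (f * y) * (-↑U⁻¹) = 1 - (1 - f) := by
      have k2 : f * y = -(f * ↑U) := by
        rw [hy', hx']
        linear_combination -hff
      rw [k2, neg_mul_neg, mul_assoc, Units.mul_inv, mul_one]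
      ring
    rw [← key]
    exact Ideal.mul_mem_right _ _ (Ideal.mul_mem_left _ _ hy)

end GelfandCleanAux

open GelfandCleanAux PrimeSpectrum MaximalSpectrum in
/-- `R` is Gelfand with totally disconnected maximal spectrum if and only if `R` is
clean, i.e. every element is the sum of a unit and an idempotent. -/
theorem isGelfand_and_totallyDisconnected_iff_clean (R : Type*) [CommRing R] :
    (IsGelfandRing R ∧ TotallyDisconnectedSpace (MaximalSpectrum R)) ↔
      (∀ a : R, ∃ u e : R, IsUnit u ∧ IsIdempotentElem e ∧ a = u + e) := by
  constructor
  · rintro ⟨hG, hTD⟩ a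
    exact clean_of_gelfand_td hG hTD a
  · intro h
    constructor
    · intro m m' hm hm' hne
      obtain ⟨e, he, hem, hem'⟩ := idem_sep_of_clean h hm hm' hne
      refine ⟨1 - e, e, ?_, ?_, by linear_combination -he.eq⟩
      · intro h1e
        have : (1 : R) ∈ m := by simpa using m.add_mem h1e hem
        exact hm.ne_top ((Ideal.eq_top_iff_one _).mpr this)
      · intro hem2
        have : (1 : R) ∈ m' := by simpa using m'.add_mem hem' hem2
        exact hm'.ne_top ((Ideal.eq_top_iff_one _).mpr this)
    · haveI : TotallySeparatedSpace (MaximalSpectrum R) := by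
        constructor
        intro x _ y _ hxy
        have hne : x.asIdeal ≠ y.asIdeal := fun hh => hxy (MaximalSpectrum.ext hh)
        obtain ⟨e, he, hex, hey⟩ := idem_sep_of_clean h x.isMaximal y.isMaximal hne
        set U : Set (MaximalSpectrum R) := toPrimeSpectrum ⁻¹' zeroLocus {e} with hUdef
        set V : Set (MaximalSpectrum R) := toPrimeSpectrum ⁻¹' zeroLocus {1 - e} with hVdef
        have hUc : IsClosed U := (isClosed_zeroLocus _).preimage toPrimeSpectrum_continuous
        have hVc : IsClosed V := (isClosed_zeroLocus _).preimage toPrimeSpectrum_continuous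
        have hcover : ∀ n : MaximalSpectrum R, n ∈ U ∪ V := by
          intro n
          have h0 : e * (1 - e) ∈ n.asIdeal := by
            have : e * (1 - e) = 0 := by linear_combination -he.eq
            rw [this]; exact n.asIdeal.zero_mem
          rcases n.isMaximal.isPrime.mem_or_mem h0 with hh | hh
          · exact Or.inl (mem_preZL_singleton.mpr hh)
          · exact Or.inr (mem_preZL_singleton.mpr hh)
        have hdisj : Disjoint U V := by
          rw [Set.disjoint_left]
          intro n hnU hnV
          rw [hUdef, mem_preZL_singleton] at hnU
          rw [hVdef, mem_preZL_singleton] at hnV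
          have : (1 : R) ∈ n.asIdeal := by simpa using n.asIdeal.add_mem hnV hnU
          exact n.isMaximal.ne_top ((Ideal.eq_top_iff_one _).mpr this)
        refine ⟨Vᶜ, Uᶜ, hVc.isOpen_compl, hUc.isOpen_compl, ?_, ?_, ?_, ?_⟩
        · intro hxV
          rw [hVdef, mem_preZL_singleton] at hxV
          have : (1 : R) ∈ x.asIdeal := by simpa using x.asIdeal.add_mem hxV hex
          exact x.isMaximal.ne_top ((Ideal.eq_top_iff_one _).mpr this)
        · intro hyU
          rw [hUdef, mem_preZL_singleton] at hyU
          have : (1 : R) ∈ y.asIdeal := by simpa using y.asIdeal.add_mem hey hyU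
          exact y.isMaximal.ne_top ((Ideal.eq_top_iff_one _).mpr this)
        · intro n _
          by_cases hn : n ∈ U
          · exact Or.inl fun hnV => Set.disjoint_left.mp hdisj hn hnV
          · exact Or.inr hn
        · rw [Set.disjoint_left]
          intro n hnV hnU
          rcases hcover n with hh | hh
          · exact hnU hh
          · exact hnV hh
      exact TotallySeparatedSpace.totallyDisconnectedSpace _
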